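/- Every achievable pair of closed-loop responses incurs at least the clairvoyant optimal cost: if Φx (of size (T+1)n×(T+1)n) and Φu (of size Tm×(T+1)n) satisfy the achievability constraint (I − 𝐙𝐀)Φx − 𝐙𝐁Φu = I, then Φxᵀ𝐐Φx + Φuᵀ𝐑Φu ⪰ 𝐂_T in the Loewner order; in particular, the regret J_T(Φuδ, δ) − δᵀ𝐂_Tδ of any achievable closed-loop system is nonnegative for every δ. -/

import Mathlib

open Matrix

noncomputable section

/-- Index type for stacked state / disturbance trajectories over horizon `T`:
block index in `Fin (T+1)`, coordinate in `Fin n`. -/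
abbrev SIdx (n T : ℕ) := Fin (T + 1) × Fin n

/-- Index type for stacked input trajectories over horizon `T`. -/
abbrev UIdx (m T : ℕ) := Fin T × Fin m

/-- The block-downshift operator `𝐙`. -/
def Zshift (n T : ℕ) : Matrix (SIdx n T) (SIdx n T) ℝ :=
  Matrix.of fun p q => if (p.1 : ℕ) = (q.1 : ℕ) + 1 ∧ p.2 = q.2 then (1 : ℝ) else 0

/-- `𝐀 = I_{T+1} ⊗ A`. -/
def bigA (n T : ℕ) (A : Matrix (Fin n) (Fin n) ℝ) : Matrix (SIdx n T) (SIdx n T) ℝ :=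
  Matrix.of fun p q => if p.1 = q.1 then A p.2 q.2 else 0

/-- `𝐁 = col(I_T ⊗ B, 0)`. -/
def bigB (n m T : ℕ) (B : Matrix (Fin n) (Fin m) ℝ) : Matrix (SIdx n T) (UIdx m T) ℝ :=
  Matrix.of fun p q => if (p.1 : ℕ) = (q.1 : ℕ) then B p.2 q.2 else 0

/-- `𝐐 = blkdiag(I_T ⊗ Q, 0)`. -/
def bigQ (n T : ℕ) (Q : Matrix (Fin n) (Fin n) ℝ) : Matrix (SIdx n T) (SIdx n T) ℝ :=
  Matrix.of fun p q => if p.1 = q.1 ∧ (p.1 : ℕ) < T then Q p.2 q.2 else 0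

/-- `𝐑 = I_T ⊗ R`. -/
def bigR (m T : ℕ) (R : Matrix (Fin m) (Fin m) ℝ) : Matrix (UIdx m T) (UIdx m T) ℝ :=
  Matrix.of fun p q => if p.1 = q.1 then R p.2 q.2 else 0

/-- `𝐅 = (I − 𝐙𝐀)⁻¹𝐙𝐁`. -/
def bigF (n m T : ℕ) (A : Matrix (Fin n) (Fin n) ℝ) (B : Matrix (Fin n) (Fin m) ℝ) :
    Matrix (SIdx n T) (UIdx m T) ℝ :=
  (1 - Zshift n T * bigA n T A)⁻¹ * (Zshift n T * bigB n m T B)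

/-- `𝐆 = (I − 𝐙𝐀)⁻¹`. -/
def bigG (n T : ℕ) (A : Matrix (Fin n) (Fin n) ℝ) : Matrix (SIdx n T) (SIdx n T) ℝ :=
  (1 - Zshift n T * bigA n T A)⁻¹

/-- The control cost `J_T(u, δ) = xᵀ𝐐x + uᵀ𝐑u` with `x = 𝐅u + 𝐆δ`. -/
def costJ (n m T : ℕ) (A : Matrix (Fin n) (Fin n) ℝ) (B : Matrix (Fin n) (Fin m) ℝ)
    (Q : Matrix (Fin n) (Fin n) ℝ) (R : Matrix (Fin m) (Fin m) ℝ)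
    (u : UIdx m T → ℝ) (δ : SIdx n T → ℝ) : ℝ :=
  let x := bigF n m T A B *ᵥ u + bigG n T A *ᵥ δ
  x ⬝ᵥ (bigQ n T Q *ᵥ x) + u ⬝ᵥ (bigR m T R *ᵥ u)

/-- `𝐏 = 𝐑 + 𝐅ᵀ𝐐𝐅`. -/
def bigP (n m T : ℕ) (A : Matrix (Fin n) (Fin n) ℝ) (B : Matrix (Fin n) (Fin m) ℝ)
    (Q : Matrix (Fin n) (Fin n) ℝ) (R : Matrix (Fin m) (Fin m) ℝ) :
    Matrix (UIdx m T) (UIdx m T) ℝ :=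
  bigR m T R + (bigF n m T A B)ᵀ * bigQ n T Q * bigF n m T A B

/-- The clairvoyant cost matrix `𝐂_T = 𝐆ᵀ𝐐(I + 𝐅𝐑⁻¹𝐅ᵀ𝐐)⁻¹𝐆`. -/
def Cmat (n m T : ℕ) (A : Matrix (Fin n) (Fin n) ℝ) (B : Matrix (Fin n) (Fin m) ℝ)
    (Q : Matrix (Fin n) (Fin n) ℝ) (R : Matrix (Fin m) (Fin m) ℝ) :
    Matrix (SIdx n T) (SIdx n T) ℝ :=
  (bigG n T A)ᵀ * bigQ n T Q *
    (1 + bigF n m T A B * (bigR m T R)⁻¹ * (bigF n m T A B)ᵀ * bigQ n T Q)⁻¹ * bigG n T A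

/-- Assemble `δ = col(x₀, w₀, …, w_{T−1})`. -/
def assemble (n T : ℕ) (x0 : Fin n → ℝ) (w : Fin T × Fin n → ℝ) : SIdx n T → ℝ :=
  fun p => if h : (p.1 : ℕ) = 0 then x0 p.2
    else w (⟨(p.1 : ℕ) - 1, by have := p.1.isLt; omega⟩, p.2)

/- ===== auxiliary lemmas ===== -/

lemma herm_transpose {k : Type*} [Fintype k] {M : Matrix k k ℝ} (h : M.IsHermitian) :
    Mᵀ = M := by
  ext i j
  have := congrFun (congrFun h.eq i) j
  simpa [Matrix.conjTranspose_apply] using this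

lemma shift_pow_eq_zero {ι : Type*} [Fintype ι] [DecidableEq ι] {N : ℕ}
    (M : Matrix (Fin N × ι) (Fin N × ι) ℝ)
    (h : ∀ p q, M p q ≠ 0 → (q.1 : ℕ) + 1 = (p.1 : ℕ)) :
    M ^ N = 0 := by
  have key : ∀ k (p q : Fin N × ι), (p.1 : ℕ) < (q.1 : ℕ) + k → (M ^ k) p q = 0 := by
    intro k
    induction k with
    | zero =>
      intro p q h'
      have hpq : p ≠ q := by intro e; subst e; omega
      simpa [Matrix.one_apply, hpq] using (rfl : (M ^ 0) p q = (1 : Matrix _ _ ℝ) p q)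
    | succ k ih =>
      intro p q hpq
      rw [pow_succ, Matrix.mul_apply]
      apply Finset.sum_eq_zero
      intro r _
      by_cases hr : M r q = 0
      · simp [hr]
      · have h1 := h r q hr
        have h2 : (M ^ k) p r = 0 := ih p r (by omega)
        simp [h2]
  ext p q
  exact key N p q (by have := p.1.isLt; omega)

lemma isNilpotent_ZA (n T : ℕ) (A : Matrix (Fin n) (Fin n) ℝ) :
    IsNilpotent (Zshift n T * bigA n T A) := by
  refine ⟨T + 1, shift_pow_eq_zero _ ?_⟩
  intro p q h
  contrapose! h
  rw [Matrix.mul_apply]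
  apply Finset.sum_eq_zero
  intro r _
  simp only [Zshift, bigA, of_apply]
  by_cases h1 : (p.1 : ℕ) = (r.1 : ℕ) + 1 ∧ p.2 = r.2
  · by_cases h2 : r.1 = q.1
    · exfalso
      have h2' : (r.1 : ℕ) = (q.1 : ℕ) := by rw [h2]
      omega
    · simp [h2]
  · simp [h1]

lemma isUnit_one_sub_ZA (n T : ℕ) (A : Matrix (Fin n) (Fin n) ℝ) :
    IsUnit (1 - Zshift n T * bigA n T A) :=
  (isNilpotent_ZA n T A).isUnit_one_sub

lemma G_mul_one_sub (n T : ℕ) (A : Matrix (Fin n) (Fin n) ℝ) :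
    bigG n T A * (1 - Zshift n T * bigA n T A) = 1 :=
  Matrix.nonsing_inv_mul _ ((Matrix.isUnit_iff_isUnit_det _).mp (isUnit_one_sub_ZA n T A))

lemma blockdiag_form {ι κ : Type*} [Fintype ι] [Fintype κ] [DecidableEq ι]
    (W : Matrix (ι × κ) (ι × κ) ℝ)
    (M : Matrix κ κ ℝ) (c : ι → Prop) [DecidablePred c]
    (hW : ∀ p q, W p q = if p.1 = q.1 ∧ c p.1 then M p.2 q.2 else 0) (x : ι × κ → ℝ) :
    x ⬝ᵥ (W *ᵥ x)
      = ∑ t : ι, if c t then (fun i => x (t, i)) ⬝ᵥ (M *ᵥ fun j => x (t, j)) else 0 := by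
  simp only [dotProduct, mulVec, hW, Fintype.sum_prod_type]
  refine Finset.sum_congr rfl fun t _ => ?_
  by_cases hc : c t
  · rw [if_pos hc]
    refine Finset.sum_congr rfl fun i _ => ?_
    congr 1
    rw [Finset.sum_eq_single t]
    · refine Finset.sum_congr rfl fun j _ => ?_
      simp [hc]
    · intro s _ hs
      apply Finset.sum_eq_zero
      intro j _
      rw [if_neg, zero_mul]
      exact fun h => hs h.1.symm
    · intro h; exact absurd (Finset.mem_univ t) h
  · rw [if_neg hc]
    apply Finset.sum_eq_zero
    intro i _
    have : (∑ s, ∑ j, (if t = s ∧ c t then M i j else 0) * x (s, j)) = 0 := by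
      apply Finset.sum_eq_zero; intro s _
      apply Finset.sum_eq_zero; intro j _
      rw [if_neg (fun h => hc h.2), zero_mul]
    rw [this, mul_zero]

lemma star_eq_self {ι : Type*} (x : ι → ℝ) : star x = x := by
  funext i; simp

lemma bigQ_posSemidef {n T : ℕ} {Q : Matrix (Fin n) (Fin n) ℝ} (hQ : Q.PosSemidef) :
    (bigQ n T Q).PosSemidef := by
  have hsym : ∀ i j, Q i j = Q j i := fun i j => by
    have := congrFun (congrFun hQ.1.eq i) j
    simpa [Matrix.conjTranspose_apply] using this.symm
  refine Matrix.PosSemidef.of_dotProduct_mulVec_nonneg ?_ ?_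
  · ext p q
    simp only [Matrix.conjTranspose_apply, bigQ, of_apply, star_trivial]
    by_cases h : p.1 = q.1
    · simp only [h]
      split_ifs with h'
      · exact hsym q.2 p.2
      · rfl
    · rw [if_neg (fun hh => h hh.1.symm), if_neg (fun hh => h hh.1)]
  · intro x
    rw [star_eq_self]
    rw [blockdiag_form (bigQ n T Q) Q (fun t => (t : ℕ) < T) (fun p q => rfl) x]
    apply Finset.sum_nonneg
    intro t _
    split
    · have := hQ.dotProduct_mulVec_nonneg (fun j => x (t, j))
      rwa [star_eq_self] at this
    · exact le_rfl

lemma bigR_posDef {m T : ℕ} {R : Matrix (Fin m) (Fin m) ℝ} (hR : R.PosDef) :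
    (bigR m T R).PosDef := by
  have hsym : ∀ i j, R i j = R j i := fun i j => by
    have := congrFun (congrFun hR.1.eq i) j
    simpa [Matrix.conjTranspose_apply] using this.symm
  have hW : ∀ p q : Fin T × Fin m,
      bigR m T R p q = if p.1 = q.1 ∧ True then R p.2 q.2 else 0 := by
    intro p q; simp [bigR]
  refine Matrix.PosDef.of_dotProduct_mulVec_pos ?_ ?_
  · ext p q
    simp only [Matrix.conjTranspose_apply, bigR, of_apply, star_trivial]
    by_cases h : p.1 = q.1
    · simp only [h, if_pos rfl]
      exact hsym q.2 p.2
    · rw [if_neg (fun hh => h hh.symm), if_neg (fun hh => h hh)]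
  · intro x hx
    rw [star_eq_self]
    rw [blockdiag_form (bigR m T R) R (fun _ => True) hW x]
    obtain ⟨p0, hp0⟩ : ∃ p, x p ≠ 0 := Function.ne_iff.mp hx
    have hpos : (0:ℝ) <
        (fun i => x (p0.1, i)) ⬝ᵥ (R *ᵥ fun j => x (p0.1, j)) := by
      have hne : (fun i => x (p0.1, i)) ≠ 0 := by
        intro h0
        exact hp0 (by simpa using congrFun h0 p0.2)
      have := hR.dotProduct_mulVec_pos hne
      rwa [star_eq_self] at this
    apply Finset.sum_pos'
    · intro t _
      split
      · have := hR.posSemidef.dotProduct_mulVec_nonneg (fun j => x (t, j))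
        rwa [star_eq_self] at this
      · exact le_rfl
    · exact ⟨p0.1, Finset.mem_univ _, by simpa using hpos⟩

lemma key_identity {ι κ : Type*} [Fintype ι] [Fintype κ] [DecidableEq κ]
    (G QQ : Matrix ι ι ℝ) (F : Matrix ι κ ℝ) (RR P : Matrix κ κ ℝ) (Φu : Matrix κ ι ℝ)
    (hFQF : Fᵀ * QQ * F = P - RR) (hQt : QQᵀ = QQ)
    (hPl : P⁻¹ * P = 1) (hPr : P * P⁻¹ = 1) (hPit : P⁻¹ᵀ = P⁻¹) :
    (G + F * Φu)ᵀ * QQ * (G + F * Φu) + Φuᵀ * RR * Φu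
      = (Φu + P⁻¹ * (Fᵀ * QQ * G))ᵀ * P * (Φu + P⁻¹ * (Fᵀ * QQ * G))
        + (Gᵀ * QQ * G - Gᵀ * QQ * F * P⁻¹ * (Fᵀ * QQ * G)) := by
  have c1 : ∀ Y : Matrix κ ι ℝ, P * (P⁻¹ * Y) = Y := fun Y => by
    rw [← Matrix.mul_assoc, hPr, Matrix.one_mul]
  have c2 : ∀ Y : Matrix κ ι ℝ, P⁻¹ * (P * Y) = Y := fun Y => by
    rw [← Matrix.mul_assoc, hPl, Matrix.one_mul]
  have c5 : ∀ Y : Matrix κ ι ℝ, Fᵀ * (QQ * (F * Y)) = P * Y - RR * Y := fun Y => by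
    rw [← Matrix.mul_assoc, ← Matrix.mul_assoc, hFQF, Matrix.sub_mul]
  simp only [Matrix.transpose_add, Matrix.transpose_mul, Matrix.transpose_transpose,
    hQt, hPit, Matrix.add_mul, Matrix.mul_add, Matrix.mul_sub, Matrix.sub_mul,
    Matrix.mul_assoc, c1, c2, c5]
  abel

lemma woodbury {ι κ : Type*} [Fintype ι] [Fintype κ] [DecidableEq ι] [DecidableEq κ]
    (QQ : Matrix ι ι ℝ) (F : Matrix ι κ ℝ) (RR P : Matrix κ κ ℝ)
    (hFQF : Fᵀ * QQ * F = P - RR)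
    (hPl : P⁻¹ * P = 1) (hPr : P * P⁻¹ = 1)
    (hRl : RR⁻¹ * RR = 1) (hRr : RR * RR⁻¹ = 1) :
    (QQ - QQ * F * P⁻¹ * (Fᵀ * QQ)) * (1 + F * RR⁻¹ * Fᵀ * QQ) = QQ := by
  have c1 : ∀ Y : Matrix κ ι ℝ, P * (P⁻¹ * Y) = Y := fun Y => by
    rw [← Matrix.mul_assoc, hPr, Matrix.one_mul]
  have c2 : ∀ Y : Matrix κ ι ℝ, P⁻¹ * (P * Y) = Y := fun Y => by
    rw [← Matrix.mul_assoc, hPl, Matrix.one_mul]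
  have c7 : ∀ Y : Matrix κ ι ℝ, RR * (RR⁻¹ * Y) = Y := fun Y => by
    rw [← Matrix.mul_assoc, hRr, Matrix.one_mul]
  have c5 : ∀ Y : Matrix κ ι ℝ, Fᵀ * (QQ * (F * Y)) = P * Y - RR * Y := fun Y => by
    rw [← Matrix.mul_assoc, ← Matrix.mul_assoc, hFQF, Matrix.sub_mul]
  simp only [Matrix.add_mul, Matrix.mul_add, Matrix.mul_sub, Matrix.sub_mul, Matrix.mul_one,
    Matrix.one_mul, Matrix.mul_assoc, c1, c2, c5, c7]
  abel

lemma quad_form {ι κ : Type*} [Fintype ι] [Fintype κ]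
    (Amat : Matrix κ ι ℝ) (M : Matrix κ κ ℝ) (v : ι → ℝ) :
    v ⬝ᵥ ((Amatᵀ * M * Amat) *ᵥ v) = (Amat *ᵥ v) ⬝ᵥ (M *ᵥ (Amat *ᵥ v)) := by
  rw [← Matrix.mulVec_mulVec, ← Matrix.mulVec_mulVec, Matrix.dotProduct_mulVec,
    Matrix.vecMul_transpose]

/-- Every achievable pair of closed-loop responses incurs at least the clairvoyant optimal
cost: `Φxᵀ𝐐Φx + Φuᵀ𝐑Φu ⪰ 𝐂_T`, and the regret of any achievable closed-loop system is
nonnegative for every disturbance `δ`. -/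
theorem stmt4 (n m T : ℕ) (hn : 0 < n) (hm : 0 < m) (hT : 1 ≤ T)
    (A : Matrix (Fin n) (Fin n) ℝ) (B : Matrix (Fin n) (Fin m) ℝ)
    (Q : Matrix (Fin n) (Fin n) ℝ) (R : Matrix (Fin m) (Fin m) ℝ)
    (hQ : Q.PosSemidef) (hR : R.PosDef)
    (Φx : Matrix (SIdx n T) (SIdx n T) ℝ) (Φu : Matrix (UIdx m T) (SIdx n T) ℝ)
    (hach : (1 - Zshift n T * bigA n T A) * Φx - Zshift n T * bigB n m T B * Φu = 1) :
    (Φxᵀ * bigQ n T Q * Φx + Φuᵀ * bigR m T R * Φu - Cmat n m T A B Q R).PosSemidef ∧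
    ∀ δ : SIdx n T → ℝ,
      0 ≤ costJ n m T A B Q R (Φu *ᵥ δ) δ - δ ⬝ᵥ (Cmat n m T A B Q R *ᵥ δ) := by
  have hQpsd := bigQ_posSemidef (T := T) hQ
  have hRpd := bigR_posDef (T := T) hR
  have hQt : (bigQ n T Q)ᵀ = bigQ n T Q := herm_transpose hQpsd.1
  have hconjF : (bigF n m T A B)ᴴ = (bigF n m T A B)ᵀ := by
    ext i j; simp [Matrix.conjTranspose_apply]
  have hFQF_psd : ((bigF n m T A B)ᵀ * bigQ n T Q * bigF n m T A B).PosSemidef := by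
    have := hQpsd.conjTranspose_mul_mul_same (bigF n m T A B)
    rwa [hconjF] at this
  have hPpd : (bigP n m T A B Q R).PosDef := hRpd.add_posSemidef hFQF_psd
  have hPdet : IsUnit (bigP n m T A B Q R).det := hPpd.det_pos.ne'.isUnit
  have hPl := Matrix.nonsing_inv_mul _ hPdet
  have hPr := Matrix.mul_nonsing_inv _ hPdet
  have hPt : (bigP n m T A B Q R)ᵀ = bigP n m T A B Q R := herm_transpose hPpd.1
  have hPit : (bigP n m T A B Q R)⁻¹ᵀ = (bigP n m T A B Q R)⁻¹ := by
    rw [Matrix.transpose_nonsing_inv, hPt]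
  have hRdet : IsUnit (bigR m T R).det := hRpd.det_pos.ne'.isUnit
  have hRl := Matrix.nonsing_inv_mul _ hRdet
  have hRr := Matrix.mul_nonsing_inv _ hRdet
  have hFQF : (bigF n m T A B)ᵀ * bigQ n T Q * bigF n m T A B
      = bigP n m T A B Q R - bigR m T R := by
    rw [bigP]; abel
  have hGl := G_mul_one_sub n T A
  have h1 : (1 - Zshift n T * bigA n T A) * Φx = 1 + Zshift n T * bigB n m T B * Φu :=
    sub_eq_iff_eq_add.mp hach
  have hΦ : Φx = bigG n T A + bigF n m T A B * Φu := by
    calc Φx = 1 * Φx := (Matrix.one_mul _).symm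
    _ = bigG n T A * (1 - Zshift n T * bigA n T A) * Φx := by rw [hGl]
    _ = bigG n T A * ((1 - Zshift n T * bigA n T A) * Φx) := Matrix.mul_assoc _ _ _
    _ = bigG n T A * (1 + Zshift n T * bigB n m T B * Φu) := by rw [h1]
    _ = bigG n T A + bigF n m T A B * Φu := by
        rw [Matrix.mul_add, Matrix.mul_one, ← Matrix.mul_assoc]
        rfl
  -- invertibility of X' = 1 + F R⁻¹ Fᵀ Q
  have hXdet : IsUnit ((1 : Matrix (SIdx n T) (SIdx n T) ℝ)
      + bigF n m T A B * (bigR m T R)⁻¹ * (bigF n m T A B)ᵀ * bigQ n T Q).det := by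
    have hXeq : (1 : Matrix (SIdx n T) (SIdx n T) ℝ)
        + bigF n m T A B * (bigR m T R)⁻¹ * (bigF n m T A B)ᵀ * bigQ n T Q
        = 1 + bigF n m T A B * ((bigR m T R)⁻¹ * ((bigF n m T A B)ᵀ * bigQ n T Q)) := by
      simp only [Matrix.mul_assoc]
    rw [hXeq, Matrix.det_one_add_mul_comm]
    have e2 : (1 : Matrix (UIdx m T) (UIdx m T) ℝ)
        + (bigR m T R)⁻¹ * ((bigF n m T A B)ᵀ * bigQ n T Q) * bigF n m T A B
        = (bigR m T R)⁻¹ * bigP n m T A B Q R := by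
      rw [Matrix.mul_assoc ((bigR m T R)⁻¹), hFQF, Matrix.mul_sub, hRl]
      abel
    rw [e2, Matrix.det_mul]
    exact (Matrix.isUnit_nonsing_inv_det _ hRdet).mul hPdet
  have hXr := Matrix.mul_nonsing_inv _ hXdet
  have hW := woodbury (bigQ n T Q) (bigF n m T A B) (bigR m T R) (bigP n m T A B Q R)
    hFQF hPl hPr hRl hRr
  have hQXinv : bigQ n T Q * ((1 : Matrix (SIdx n T) (SIdx n T) ℝ)
        + bigF n m T A B * (bigR m T R)⁻¹ * (bigF n m T A B)ᵀ * bigQ n T Q)⁻¹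
      = bigQ n T Q
        - bigQ n T Q * bigF n m T A B * (bigP n m T A B Q R)⁻¹ * ((bigF n m T A B)ᵀ * bigQ n T Q) := by
    calc bigQ n T Q * ((1 : Matrix (SIdx n T) (SIdx n T) ℝ)
          + bigF n m T A B * (bigR m T R)⁻¹ * (bigF n m T A B)ᵀ * bigQ n T Q)⁻¹
        = ((bigQ n T Q
            - bigQ n T Q * bigF n m T A B * (bigP n m T A B Q R)⁻¹ * ((bigF n m T A B)ᵀ * bigQ n T Q))
          * (1 + bigF n m T A B * (bigR m T R)⁻¹ * (bigF n m T A B)ᵀ * bigQ n T Q))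
          * ((1 : Matrix (SIdx n T) (SIdx n T) ℝ)
            + bigF n m T A B * (bigR m T R)⁻¹ * (bigF n m T A B)ᵀ * bigQ n T Q)⁻¹ := by
          rw [hW]
      _ = _ := by rw [Matrix.mul_assoc, hXr, Matrix.mul_one]
  have hCm : Cmat n m T A B Q R
      = (bigG n T A)ᵀ * bigQ n T Q * bigG n T A
        - (bigG n T A)ᵀ * bigQ n T Q * bigF n m T A B * (bigP n m T A B Q R)⁻¹
          * ((bigF n m T A B)ᵀ * bigQ n T Q * bigG n T A) := by
    rw [Cmat, Matrix.mul_assoc ((bigG n T A)ᵀ), hQXinv]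
    simp only [Matrix.mul_sub, Matrix.sub_mul, Matrix.mul_assoc]
  have hKey := key_identity (bigG n T A) (bigQ n T Q) (bigF n m T A B) (bigR m T R)
    (bigP n m T A B Q R) Φu hFQF hQt hPl hPr hPit
  have hMain : Φxᵀ * bigQ n T Q * Φx + Φuᵀ * bigR m T R * Φu - Cmat n m T A B Q R
      = (Φu + (bigP n m T A B Q R)⁻¹ * ((bigF n m T A B)ᵀ * bigQ n T Q * bigG n T A))ᵀ
        * bigP n m T A B Q R
        * (Φu + (bigP n m T A B Q R)⁻¹ * ((bigF n m T A B)ᵀ * bigQ n T Q * bigG n T A)) := by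
    rw [hΦ, hKey, hCm]
    abel
  have hDpsd : (Φxᵀ * bigQ n T Q * Φx + Φuᵀ * bigR m T R * Φu - Cmat n m T A B Q R).PosSemidef := by
    rw [hMain]
    have hK : (Φu + (bigP n m T A B Q R)⁻¹ * ((bigF n m T A B)ᵀ * bigQ n T Q * bigG n T A))ᴴ
        = (Φu + (bigP n m T A B Q R)⁻¹ * ((bigF n m T A B)ᵀ * bigQ n T Q * bigG n T A))ᵀ := by
      ext i j; simp [Matrix.conjTranspose_apply]
    have := hPpd.posSemidef.conjTranspose_mul_mul_same
      (Φu + (bigP n m T A B Q R)⁻¹ * ((bigF n m T A B)ᵀ * bigQ n T Q * bigG n T A))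
    rwa [hK] at this
  refine ⟨hDpsd, fun δ => ?_⟩
  have key := hDpsd.dotProduct_mulVec_nonneg δ
  rw [star_eq_self] at key
  have hx : bigF n m T A B *ᵥ (Φu *ᵥ δ) + bigG n T A *ᵥ δ = Φx *ᵥ δ := by
    rw [hΦ, Matrix.add_mulVec, ← Matrix.mulVec_mulVec]
    exact add_comm _ _
  have heq : costJ n m T A B Q R (Φu *ᵥ δ) δ - δ ⬝ᵥ (Cmat n m T A B Q R *ᵥ δ)
      = δ ⬝ᵥ ((Φxᵀ * bigQ n T Q * Φx + Φuᵀ * bigR m T R * Φu - Cmat n m T A B Q R) *ᵥ δ) := by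
    simp only [costJ]
    rw [hx]
    simp only [Matrix.sub_mulVec, Matrix.add_mulVec, dotProduct_sub, dotProduct_add,
      quad_form]
  rw [heq]
  exact key


end
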